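/- For every program p and input x ∈ 2^ℕ, either the computation of p on x halts at a countable stage, or the computation repeats itself by a countable stage: there are countable limit ordinals δ < δ′ such that the snapshots at stages δ and δ′ are identical and no tape cell whose value is 0 in this snapshot ever has value 1 at any stage strictly between δ and δ′. -/

import Mathlib

open scoped Classical

namespace ITTM

/-- A real is an element of Cantor space. -/
abbrev R := ℕ → Bool

/-- The constant-zero real. -/
def zeroR : R := fun _ => false

/-- The real ⟨1,0,0,...⟩ coding the answer "Yes". -/
def oneR : R := fun n => decide (n = 0)

/-- The real coding a natural number `p`: `p` ones followed by zeros. -/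
def natR (p : ℕ) : R := fun n => decide (n < p)

/-- The real coding the pair of reals `(y, z)`. -/
def pairR (y z : R) : R := fun n => if n % 2 = 0 then y (n / 2) else z (n / 2)

/-- A snapshot of an infinite time Turing machine computation with state set
`Fin (Q+1)`: the current state, the head position, and the contents of the
three tapes (tape 0 is the input tape, tape 1 the scratch tape, tape 2 the
output tape); cells hold values in `Bool` (`true` = 1, `false` = 0). -/
structure Snapshot (Q : ℕ) where
  state : Fin (Q + 1)
  head : ℕ
  tape : Fin 3 → ℕ → Bool

/-- An infinite time Turing machine program: a finite set of states
`Fin (Q+1)` with distinguished start, limit and halt states, and a finite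
transition table which, given the current state and the three cell values
read by the head, specifies the next state, the three values to write, and
the direction to move (`true` = right, `false` = left). -/
structure Machine where
  Q : ℕ
  start : Fin (Q + 1)
  limit : Fin (Q + 1)
  halt : Fin (Q + 1)
  trans : Fin (Q + 1) × (Fin 3 → Bool) → Fin (Q + 1) × (Fin 3 → Bool) × Bool

instance : Inhabited Machine := ⟨⟨0, 0, 0, 0, fun _ => (0, fun _ => false, true)⟩⟩

namespace Machine

/-- The initial snapshot on input `x`: head on cell 0 in the start state, `x`
on the input tape, the other tapes filled with zeros. -/
def init (M : Machine) (x : R) : Snapshot M.Q where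
  state := M.start
  head := 0
  tape := fun i n => if i = 0 then x n else false

/-- One step of computation applied to a snapshot. -/
def stepSnap (M : Machine) (s : Snapshot M.Q) : Snapshot M.Q :=
  let t := M.trans (s.state, fun i => s.tape i s.head)
  { state := t.1
    head := if t.2.2 then s.head + 1 else s.head - 1
    tape := fun i n => if n = s.head then t.2.1 i else s.tape i n }

/-- The snapshot of the computation of machine `M` on input `x` at ordinal
stage `α`, defined by transfinite recursion: at stage 0 the initial snapshot,
at successor stages the transition table is applied, and at limit stages the
head is on cell 0 in the limit state and each cell holds the `limsup` of its
earlier values (1 iff its value was 1 cofinally often below the limit). -/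
noncomputable def snap (M : Machine) (x : R) : Ordinal.{0} → Snapshot M.Q :=
  WellFounded.fix Ordinal.lt_wf fun α ih =>
    if _h0 : α = 0 then M.init x
    else if hs : ∃ β, β < α ∧ α = β + 1 then
      M.stepSnap (ih hs.choose hs.choose_spec.1)
    else
      { state := M.limit
        head := 0
        tape := fun i n =>
          decide (∀ β < α, ∃ γ, β ≤ γ ∧ ∃ hγ : γ < α, (ih γ hγ).tape i n = true) }

/-- The machine is in the halt state at stage `α`. -/
def haltedAt (M : Machine) (x : R) (α : Ordinal) : Prop :=
  (M.snap x α).state = M.halt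

/-- The computation of `M` on input `x` halts exactly at stage `α`: stage `α`
is the first stage at which the machine is in the halt state. -/
def haltsAt (M : Machine) (x : R) (α : Ordinal) : Prop :=
  M.haltedAt x α ∧ ∀ β < α, ¬ M.haltedAt x β

/-- The computation of `M` on input `x` halts. -/
def halts (M : Machine) (x : R) : Prop := ∃ α, M.haltedAt x α

/-- The computation of `M` on input `x` halts with output `y`: at the first
stage at which the machine is in the halt state, the output tape reads `y`. -/
def outputs (M : Machine) (x y : R) : Prop :=
  ∃ α, M.haltsAt x α ∧ (M.snap x α).tape 2 = y

end Machine

/-- Machines are coded by natural numbers. -/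
noncomputable instance : Encodable Machine :=
  Encodable.ofEquiv
    (Σ Q : ℕ, (Fin (Q + 1) × Fin (Q + 1) × Fin (Q + 1)) ×
      ((Fin (Q + 1) × (Fin 3 → Bool)) → Fin (Q + 1) × (Fin 3 → Bool) × Bool))
    { toFun := fun M => ⟨M.Q, (M.start, M.limit, M.halt), M.trans⟩
      invFun := fun s => ⟨s.1, s.2.1.1, s.2.1.2.1, s.2.1.2.2, s.2.2⟩
      left_inv := fun _ => rfl
      right_inv := fun _ => rfl }

/-- The machine coded by the natural number `p`; every natural number codes a
machine, and every machine is coded by some natural number. -/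
noncomputable def prog (p : ℕ) : Machine :=
  ((Encodable.decode p : Option Machine)).getD default

/-- `φ_p(x)` halts with output `y`. -/
noncomputable def phiOutputs (p : ℕ) (x y : R) : Prop := (prog p).outputs x y

/-- A set of reals is infinite time decidable when some machine, on any input
`x`, halts with output ⟨1,0,0,...⟩ if `x ∈ A` and output ⟨0,0,0,...⟩ if
`x ∉ A`. -/
def ITTMDecidable (A : Set R) : Prop :=
  ∃ M : Machine, ∀ x : R, (x ∈ A → M.outputs x oneR) ∧ (x ∉ A → M.outputs x zeroR)

/-- A set of reals is infinite time semi-decidable when it is the halting set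
of some machine. -/
def ITTMSemiDecidable (A : Set R) : Prop :=
  ∃ M : Machine, A = {x : R | M.halts x}

/-- The binary relation on ℕ coded by the real `x`:
`n ◁ k ⟺ x(⟨n,k⟩) = 1` where `⟨·,·⟩` is the pairing function. -/
def rel (x : R) (n k : ℕ) : Prop := x (Nat.pair n k) = true

/-- The field of the relation coded by `x`. -/
def field (x : R) : Set ℕ := {n | ∃ k, rel x n k ∨ rel x k n}

/-- The relation coded by `x`, restricted to its field. -/
def relOn (x : R) : field x → field x → Prop := fun a b => rel x a.1 b.1

/-- The real `x` codes a well-order of (a subset of) ℕ, namely its field. -/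
def codesWellOrder (x : R) : Prop := IsWellOrder (field x) (relOn x)

/-- The set of reals coding well-orders. -/
def WO : Set R := {x | codesWellOrder x}

/-- The real `x` codes a well-order of order type `α`. -/
def codesOrdinal (x : R) (α : Ordinal) : Prop :=
  ∃ h : codesWellOrder x, @Ordinal.type _ (relOn x) h = α

/-- An ordinal is clockable when some machine on input 0 halts exactly at
stage `α`. -/
def Clockable (α : Ordinal) : Prop := ∃ M : Machine, M.haltsAt zeroR α

/-- A real is writable when it is the output of some machine on input 0. -/
def WritableReal (x : R) : Prop := ∃ M : Machine, M.outputs zeroR x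

/-- An ordinal is writable when some writable real codes a well-order of that
order type. -/
def WritableOrdinal (α : Ordinal) : Prop :=
  ∃ x : R, WritableReal x ∧ codesOrdinal x α

/-- A real is eventually writable when some machine on input 0 never halts,
but from some stage onward the content of its output tape is exactly `x`. -/
def EventuallyWritableReal (x : R) : Prop :=
  ∃ M : Machine, ¬ M.halts zeroR ∧ ∃ α : Ordinal, ∀ β ≥ α, (M.snap zeroR β).tape 2 = x

/-- An ordinal is eventually writable when some eventually writable real codes
a well-order of that order type. -/
def EventuallyWritableOrdinal (α : Ordinal) : Prop :=
  ∃ x : R, EventuallyWritableReal x ∧ codesOrdinal x α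

end ITTM

namespace ITTM
namespace Machine

lemma snap_limit (M : Machine) (x : R) {δ : Ordinal} (hδ : Order.IsSuccLimit δ) :
    M.snap x δ = ⟨M.limit, 0, fun i n => decide (∀ β < δ, ∃ γ, β ≤ γ ∧ ∃ _h : γ < δ,
        (M.snap x γ).tape i n = true)⟩ := by
  have h1 : δ ≠ 0 := hδ.pos.ne'
  have h2 : ¬ ∃ β, β < δ ∧ δ = β + 1 := by
    rintro ⟨β, hβ, heq⟩
    have := hδ.succ_lt hβ
    rw [← Ordinal.add_one_eq_succ, ← heq] at this
    exact lt_irrefl _ this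
  rw [snap, WellFounded.fix_eq, dif_neg h1, dif_neg h2]

end Machine

lemma countable_iSup_lt {ι : Type} [Countable ι] (f : ι → Ordinal.{0})
    (hf : ∀ i, f i < (Cardinal.aleph 1).ord) : iSup f < (Cardinal.aleph 1).ord :=
  Cardinal.iSup_lt_ord_of_isRegular Cardinal.isRegular_aleph_one
    (lt_of_le_of_lt Cardinal.mk_le_aleph0 Cardinal.aleph0_lt_aleph_one) hf

end ITTM

theorem halts_or_repeats (M : ITTM.Machine) (x : ITTM.R) :
    (∃ α < (Cardinal.aleph 1).ord, M.haltsAt x α) ∨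
    (∃ δ δ' : Ordinal, δ < δ' ∧ δ' < (Cardinal.aleph 1).ord ∧
      Order.IsSuccLimit δ ∧ Order.IsSuccLimit δ' ∧ M.snap x δ = M.snap x δ' ∧
      ∀ (i : Fin 3) (n : ℕ), (M.snap x δ).tape i n = false →
        ∀ β : Ordinal, δ < β → β < δ' → (M.snap x β).tape i n = false) := by
  classical
  set ω1 := (Cardinal.aleph 1).ord with hω1def
  by_cases h : ∃ α < ω1, M.haltedAt x α
  · left
    obtain ⟨α₀, hα₀, hh⟩ := h
    have hne : {α : Ordinal | M.haltedAt x α}.Nonempty := ⟨α₀, hh⟩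
    refine ⟨Ordinal.lt_wf.min _ hne,
      lt_of_le_of_lt (not_lt.1 (Ordinal.lt_wf.not_lt_min _ hh)) hα₀,
      Ordinal.lt_wf.min_mem _ hne, fun β hβ hb => Ordinal.lt_wf.not_lt_min _ hb hβ⟩
  · right
    clear h
    have hω1lim : Order.IsSuccLimit ω1 := Cardinal.isSuccLimit_ord (le_of_lt Cardinal.aleph0_lt_aleph_one)
    have hsucc : ∀ β < ω1, β + 1 < ω1 := fun β hβ => by
      rw [Ordinal.add_one_eq_succ]; exact hω1lim.succ_lt hβ
    have hlt1 : ∀ β : Ordinal, β < β + 1 := fun β => by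
      rw [Ordinal.add_one_eq_succ]; exact Order.lt_succ β
    set S : Fin 3 → ℕ → Prop := fun i n =>
      ∀ β < ω1, ∃ γ, β ≤ γ ∧ γ < ω1 ∧ (M.snap x γ).tape i n = true with hSdef
    -- bounds for cells that are eventually false
    have hσ : ∀ (i : Fin 3) (n : ℕ), ∃ σ, σ < ω1 ∧
        (¬ S i n → ∀ γ, σ ≤ γ → γ < ω1 → (M.snap x γ).tape i n = false) := by
      intro i n
      by_cases hs : S i n
      · exact ⟨0, hω1lim.pos, fun h => absurd hs h⟩
      · have hs' : ¬ ∀ β < ω1, ∃ γ, β ≤ γ ∧ γ < ω1 ∧ (M.snap x γ).tape i n = true := hs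
        push_neg at hs'
        obtain ⟨β, hβ, hall⟩ := hs'
        exact ⟨β, hβ, fun _ γ h1 h2 => by simpa using hall γ h1 h2⟩
    choose σc hσc1 hσc2 using hσ
    set σ0 : Ordinal := ⨆ c : Fin 3 × ℕ, σc c.1 c.2 with hσ0def
    have hσ0lt : σ0 < ω1 := ITTM.countable_iSup_lt _ fun c => hσc1 c.1 c.2
    have hσ0le : ∀ i n, σc i n ≤ σ0 := fun i n =>
      Ordinal.le_iSup (fun c : Fin 3 × ℕ => σc c.1 c.2) (i, n)
    -- next-stage witnesses
    have hg : ∀ (β : Ordinal) (i : Fin 3) (n : ℕ), ∃ γ, β < γ ∧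
        (β < ω1 → γ < ω1 ∧ (S i n → (M.snap x γ).tape i n = true)) := by
      intro β i n
      by_cases hβ : β < ω1
      · by_cases hs : S i n
        · obtain ⟨γ, h1, h2, h3⟩ := hs (β + 1) (hsucc β hβ)
          exact ⟨γ, lt_of_lt_of_le (hlt1 β) h1, fun _ => ⟨h2, fun _ => h3⟩⟩
        · exact ⟨β + 1, hlt1 β, fun _ => ⟨hsucc β hβ, fun h => absurd h hs⟩⟩
      · exact ⟨β + 1, hlt1 β, fun h => absurd h hβ⟩
    choose g hg1 hg2 using hg
    set F : Ordinal → Ordinal := fun β => ⨆ c : Fin 3 × ℕ, g β c.1 c.2 with hFdef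
    have hFgt : ∀ β, β < F β := fun β =>
      lt_of_lt_of_le (hg1 β 0 0) (Ordinal.le_iSup (fun c : Fin 3 × ℕ => g β c.1 c.2) (0, 0))
    have hFge : ∀ β i n, g β i n ≤ F β := fun β i n =>
      Ordinal.le_iSup (fun c : Fin 3 × ℕ => g β c.1 c.2) (i, n)
    have hFlt : ∀ β < ω1, F β < ω1 := fun β hβ =>
      ITTM.countable_iSup_lt _ fun c => (hg2 β c.1 c.2 hβ).1
    -- key construction
    have key : ∀ θ : Ordinal, σ0 ≤ θ → θ < ω1 → ∃ δ, θ < δ ∧ δ < ω1 ∧ Order.IsSuccLimit δ ∧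
        M.snap x δ = ⟨M.limit, 0, fun i n => decide (S i n)⟩ := by
      intro θ hθ0 hθ
      set d : ℕ → Ordinal := fun k => Nat.rec (θ + 1) (fun _ a => F a + 1) k with hd
      have hd0 : d 0 = θ + 1 := rfl
      have hdsucc : ∀ k, d (k + 1) = F (d k) + 1 := fun k => rfl
      have hdlt : ∀ k, d k < ω1 := by
        intro k
        induction k with
        | zero => exact hsucc θ hθ
        | succ k ih => rw [hdsucc]; exact hsucc _ (hFlt _ ih)
      have hmono : ∀ k, d k < d (k + 1) := fun k => by
        rw [hdsucc]; exact lt_trans (hFgt (d k)) (hlt1 _)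
      set δ := ⨆ k, d k with hδdef
      have hdle : ∀ k, d k ≤ δ := fun k => Ordinal.le_iSup d k
      have hδlt : δ < ω1 := ITTM.countable_iSup_lt d hdlt
      have hθδ : θ < δ := lt_of_lt_of_le (hlt1 θ) (hd0 ▸ hdle 0)
      have hstrict : ∀ k, d k < δ := fun k => lt_of_lt_of_le (hmono k) (hdle (k + 1))
      have hlim : Order.IsSuccLimit δ := by
        refine Ordinal.isSuccLimit_iff.2 ⟨?_, Order.isSuccPrelimit_of_succ_lt ?_⟩
        · exact ne_of_gt (lt_of_le_of_lt (zero_le (a := θ)) hθδ)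
        · intro β hβ
          obtain ⟨k, hk⟩ := Ordinal.lt_iSup_iff.1 hβ
          exact lt_of_le_of_lt (Order.succ_le_of_lt hk) (hstrict k)
      refine ⟨δ, hθδ, hδlt, hlim, ?_⟩
      rw [M.snap_limit x hlim]
      congr 1
      funext i n
      rw [decide_eq_decide]
      by_cases hs : S i n
      · refine iff_of_true (fun β hβ => ?_) hs
        obtain ⟨k, hk⟩ := Ordinal.lt_iSup_iff.1 hβ
        refine ⟨g (d k) i n, le_of_lt (lt_trans hk (hg1 (d k) i n)), ?_, ?_⟩
        · exact lt_of_le_of_lt (le_trans (hFge (d k) i n) (le_of_lt (hlt1 _)))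
            (hdsucc k ▸ hstrict (k + 1))
        · exact (hg2 (d k) i n (hdlt k)).2 hs
      · refine iff_of_false (fun hforall => ?_) hs
        obtain ⟨γ, hγ1, hγ2, hγ3⟩ := hforall σ0 (lt_of_le_of_lt hθ0 hθδ)
        have hfalse := hσc2 i n hs γ (le_trans (hσ0le i n) hγ1) (lt_trans hγ2 hδlt)
        rw [hγ3] at hfalse
        exact Bool.true_eq_false ▸ hfalse
    obtain ⟨δ, hσδ, hδ1, hδlim, hδsnap⟩ := key σ0 le_rfl hσ0lt
    obtain ⟨δ', hδδ', hδ'1, hδ'lim, hδ'snap⟩ := key δ (le_of_lt hσδ) hδ1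
    refine ⟨δ, δ', hδδ', hδ'1, hδlim, hδ'lim, by rw [hδsnap, hδ'snap], ?_⟩
    intro i n hfalse β hβ1 hβ2
    rw [hδsnap] at hfalse
    simp only [decide_eq_false_iff_not] at hfalse
    exact hσc2 i n hfalse β
      (le_of_lt (lt_of_le_of_lt (hσ0le i n) (lt_trans hσδ hβ1)))
      (lt_trans hβ2 hδ'1)
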